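/- Let t ≥ 2, let M be an odd positive integer, and let ζ be a primitive M-th root of unity. Then the mean value of ψ_t over a full period is zero: ∑_{m=0}^{M−1} ζ^{3·2^t m² + (2^{t+2}+3)m + 2^t + 3} − ∑_{m=0}^{M−1} ζ^{3·2^t m² + (2^{t+2}−3)m + 2^t − 1} + ∑_{m=0}^{M−1} ζ^{3·2^t m² + (2^{t+1}−3)m} − ∑_{m=0}^{M−1} ζ^{3·2^t m² + (2^{t+1}+3)m + 2} = 0. -/

import Mathlib

lemma zpow_congr_mod {M : ℕ} (hM : 0 < M) {ζ : ℂ} (hζ : IsPrimitiveRoot ζ M)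
    {j k : ℤ} (h : (M : ℤ) ∣ j - k) : ζ ^ j = ζ ^ k := by
  obtain ⟨d, hd⟩ := h
  have hz : ζ ≠ 0 := hζ.ne_zero hM.ne'
  have h1 : ζ ^ (M : ℤ) = 1 := by exact_mod_cast hζ.pow_eq_one
  have hj : j = k + (M : ℤ) * d := by linarith
  rw [hj, zpow_add₀ hz, zpow_mul, h1, one_zpow, mul_one]

open Fin.NatCast in
lemma sum_shift {M : ℕ} (hM : 0 < M) {ζ : ℂ} (hζ : IsPrimitiveRoot ζ M)
    (f : ℤ → ℤ) (hf : ∀ x y : ℤ, (M : ℤ) ∣ x - y → (M : ℤ) ∣ f x - f y) (a : ℕ) :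
    ∑ m ∈ Finset.range M, ζ ^ f ((m : ℤ) + (a : ℤ)) = ∑ m ∈ Finset.range M, ζ ^ f (m : ℤ) := by
  haveI : NeZero M := ⟨hM.ne'⟩
  rw [← Fin.sum_univ_eq_sum_range (fun m => ζ ^ f ((m : ℤ) + (a : ℤ))),
      ← Fin.sum_univ_eq_sum_range (fun m => ζ ^ f (m : ℤ)),
      ← Equiv.sum_comp (Equiv.addRight ((a : Fin M))) (fun i : Fin M => ζ ^ f ((i : ℕ) : ℤ))]
  refine Finset.sum_congr rfl fun i _ => ?_
  simp only [Equiv.coe_addRight]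
  apply zpow_congr_mod hM hζ
  apply hf
  have hnat : (i.val + a) ≡ ((i.val + a % M) % M) [MOD M] :=
    ((Nat.mod_modEq (i.val + a % M) M).trans (Nat.ModEq.add_left _ (Nat.mod_modEq a M))).symm
  have hd := hnat.symm.dvd
  have hval : ((i + (a : Fin M)).val) = (i.val + a % M) % M := by
    simp [Fin.add_def, Fin.val_natCast]
  rw [hval]
  have hc : ((i.val + a : ℕ) : ℤ) = (i.val : ℤ) + (a : ℤ) := by push_cast; ring
  rw [← hc]
  exact hd

lemma pair_eq {M : ℕ} (hM : 0 < M) {ζ : ℂ} (hζ : IsPrimitiveRoot ζ M)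
    (q : ℤ) (a : ℕ) (ha : (M : ℤ) ∣ q * a - 1) (k c : ℤ) :
    ∑ m ∈ Finset.range M, ζ ^ (3 * q * (m : ℤ) ^ 2 + (k * q - 3) * (m : ℤ) + c)
      = ∑ m ∈ Finset.range M, ζ ^ (3 * q * (m : ℤ) ^ 2 + (k * q + 3) * (m : ℤ) + c + k) := by
  have hf : ∀ x y : ℤ, (M : ℤ) ∣ x - y →
      (M : ℤ) ∣ (3 * q * x ^ 2 + (k * q - 3) * x + c) - (3 * q * y ^ 2 + (k * q - 3) * y + c) := by
    rintro x y ⟨d, hd⟩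
    exact ⟨d * (3 * q * (x + y) + (k * q - 3)),
      by linear_combination (3 * q * (x + y) + (k * q - 3)) * hd⟩
  calc ∑ m ∈ Finset.range M, ζ ^ (3 * q * (m : ℤ) ^ 2 + (k * q - 3) * (m : ℤ) + c)
      = ∑ m ∈ Finset.range M,
          ζ ^ (3 * q * ((m : ℤ) + (a : ℤ)) ^ 2 + (k * q - 3) * ((m : ℤ) + (a : ℤ)) + c) :=
        (sum_shift hM hζ (fun x => 3 * q * x ^ 2 + (k * q - 3) * x + c) hf a).symm
    _ = ∑ m ∈ Finset.range M, ζ ^ (3 * q * (m : ℤ) ^ 2 + (k * q + 3) * (m : ℤ) + c + k) := by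
        refine Finset.sum_congr rfl fun m _ => ?_
        apply zpow_congr_mod hM hζ
        obtain ⟨d, hd⟩ := ha
        exact ⟨d * (6 * m + 3 * a + k),
          by linear_combination (6 * (m : ℤ) + 3 * (a : ℤ) + k) * hd⟩

theorem four_sum_zero (t : ℕ) (ht : 2 ≤ t) (M : ℕ) (hM : 0 < M) (hModd : Odd M)
    (ζ : ℂ) (hζ : IsPrimitiveRoot ζ M) :
    ∑ m ∈ Finset.range M,
        ζ ^ (3 * 2 ^ t * (m : ℤ) ^ 2 + (2 ^ (t + 2) + 3) * (m : ℤ) + 2 ^ t + 3) -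
      ∑ m ∈ Finset.range M,
        ζ ^ (3 * 2 ^ t * (m : ℤ) ^ 2 + (2 ^ (t + 2) - 3) * (m : ℤ) + 2 ^ t - 1) +
      ∑ m ∈ Finset.range M,
        ζ ^ (3 * 2 ^ t * (m : ℤ) ^ 2 + (2 ^ (t + 1) - 3) * (m : ℤ)) -
      ∑ m ∈ Finset.range M,
        ζ ^ (3 * 2 ^ t * (m : ℤ) ^ 2 + (2 ^ (t + 1) + 3) * (m : ℤ) + 2) = 0 := by
  have hco : Nat.Coprime (2 ^ t) M :=
    Nat.Coprime.pow_left t (Nat.coprime_two_left.mpr hModd)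
  obtain ⟨u, v, huv⟩ := (Nat.isCoprime_iff_coprime.mpr hco : IsCoprime ((2 ^ t : ℕ) : ℤ) (M : ℤ))
  set a : ℕ := (u % M).toNat with haa
  have haM : (a : ℤ) = u % M :=
    Int.toNat_of_nonneg (Int.emod_nonneg u (by exact_mod_cast hM.ne'))
  have ha : (M : ℤ) ∣ (2 : ℤ) ^ t * a - 1 := by
    have h1 : u % (M : ℤ) - u = (M : ℤ) * (-(u / M)) := by rw [Int.emod_def]; ring
    refine ⟨2 ^ t * (-(u / M)) - v, ?_⟩
    rw [haM]
    have huv' : u * (2 : ℤ) ^ t + v * M = 1 := by push_cast at huv; exact huv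
    linear_combination 2 ^ t * h1 + huv'
  have h21 : ∑ m ∈ Finset.range M,
        ζ ^ (3 * 2 ^ t * (m : ℤ) ^ 2 + (2 ^ (t + 2) - 3) * (m : ℤ) + 2 ^ t - 1)
      = ∑ m ∈ Finset.range M,
        ζ ^ (3 * 2 ^ t * (m : ℤ) ^ 2 + (2 ^ (t + 2) + 3) * (m : ℤ) + 2 ^ t + 3) := by
    have e1 : ∑ m ∈ Finset.range M,
        ζ ^ (3 * 2 ^ t * (m : ℤ) ^ 2 + (2 ^ (t + 2) - 3) * (m : ℤ) + 2 ^ t - 1)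
        = ∑ m ∈ Finset.range M,
        ζ ^ (3 * (2 : ℤ) ^ t * (m : ℤ) ^ 2 + (4 * (2 : ℤ) ^ t - 3) * (m : ℤ) + ((2 : ℤ) ^ t - 1)) := by
      refine Finset.sum_congr rfl fun m _ => ?_
      congr 1
      ring
    have e2 : ∑ m ∈ Finset.range M,
        ζ ^ (3 * (2 : ℤ) ^ t * (m : ℤ) ^ 2 + (4 * (2 : ℤ) ^ t + 3) * (m : ℤ) + ((2 : ℤ) ^ t - 1) + 4)
        = ∑ m ∈ Finset.range M,
        ζ ^ (3 * 2 ^ t * (m : ℤ) ^ 2 + (2 ^ (t + 2) + 3) * (m : ℤ) + 2 ^ t + 3) := by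
      refine Finset.sum_congr rfl fun m _ => ?_
      congr 1
      ring
    rw [e1, pair_eq hM hζ ((2 : ℤ) ^ t) a ha 4 ((2 : ℤ) ^ t - 1), e2]
  have h34 : ∑ m ∈ Finset.range M,
        ζ ^ (3 * 2 ^ t * (m : ℤ) ^ 2 + (2 ^ (t + 1) - 3) * (m : ℤ))
      = ∑ m ∈ Finset.range M,
        ζ ^ (3 * 2 ^ t * (m : ℤ) ^ 2 + (2 ^ (t + 1) + 3) * (m : ℤ) + 2) := by
    have e1 : ∑ m ∈ Finset.range M,
        ζ ^ (3 * 2 ^ t * (m : ℤ) ^ 2 + (2 ^ (t + 1) - 3) * (m : ℤ))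
        = ∑ m ∈ Finset.range M,
        ζ ^ (3 * (2 : ℤ) ^ t * (m : ℤ) ^ 2 + (2 * (2 : ℤ) ^ t - 3) * (m : ℤ) + (0 : ℤ)) := by
      refine Finset.sum_congr rfl fun m _ => ?_
      congr 1
      ring
    have e2 : ∑ m ∈ Finset.range M,
        ζ ^ (3 * (2 : ℤ) ^ t * (m : ℤ) ^ 2 + (2 * (2 : ℤ) ^ t + 3) * (m : ℤ) + (0 : ℤ) + 2)
        = ∑ m ∈ Finset.range M,
        ζ ^ (3 * 2 ^ t * (m : ℤ) ^ 2 + (2 ^ (t + 1) + 3) * (m : ℤ) + 2) := by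
      refine Finset.sum_congr rfl fun m _ => ?_
      congr 1
      ring
    rw [e1, pair_eq hM hζ ((2 : ℤ) ^ t) a ha 2 (0 : ℤ), e2]
  rw [h21, h34]
  ring
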